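/- Define the differential operator D₁ acting on smooth functions f : ℝ → ℝ by D₁ f := −h'' + h where h := (g' + tanh·g) and g := (f' + tanh·f), i.e. D₁ = (−d²/dx² + 1)∘(d/dx + tanh(x))∘(d/dx + tanh(x)). Then for all x ∈ ℝ, D₁( sech − 6 sech³ + 6 sech⁵ )(x) = 192 sech³(x) − 3456 sech⁵(x) + 9720 sech⁷(x) − 6720 sech⁹(x). -/

import Mathlib

open Real

noncomputable def sech (x : ℝ) : ℝ := (Real.cosh x)⁻¹

/-- The operator `S = d/dx + tanh(x)`. -/
noncomputable def Sop (f : ℝ → ℝ) : ℝ → ℝ := fun x => deriv f x + Real.tanh x * f x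

/-- The operator `D₁ = (−d²/dx² + 1) ∘ S ∘ S`. -/
noncomputable def D1 (f : ℝ → ℝ) : ℝ → ℝ :=
  fun x => -deriv (deriv (Sop (Sop f))) x + Sop (Sop f) x

lemma hasDerivAt_sech (x : ℝ) : HasDerivAt sech (-sinh x * sech x ^ 2) x := by
  have h := (Real.hasDerivAt_cosh x).inv (Real.cosh_pos x).ne'
  refine h.congr_deriv ?_
  simp [sech, div_eq_mul_inv, inv_pow]

lemma hf (x : ℝ) : HasDerivAt (fun y => sech y - 6 * sech y ^ 3 + 6 * sech y ^ 5)
    (sinh x * (-sech x ^ 2 + 18 * sech x ^ 4 - 30 * sech x ^ 6)) x := by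
  have h := hasDerivAt_sech x
  have h2 := (h.sub ((h.pow 3).const_mul 6)).add ((h.pow 5).const_mul 6)
  refine h2.congr_deriv ?_
  ring

lemma step1 : Sop (fun y => sech y - 6 * sech y ^ 3 + 6 * sech y ^ 5)
    = fun y => 12 * sinh y * sech y ^ 4 - 24 * sinh y * sech y ^ 6 := by
  funext x
  simp only [Sop, (hf x).deriv, Real.tanh_eq_sinh_div_cosh]
  simp only [sech]
  field_simp
  ring

lemma hg (x : ℝ) : HasDerivAt (fun y => 12 * sinh y * sech y ^ 4 - 24 * sinh y * sech y ^ 6)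
    (12 * (cosh x * sech x ^ 4 + sinh x * (4 * sech x ^ 3 * (-sinh x * sech x ^ 2)))
     - 24 * (cosh x * sech x ^ 6 + sinh x * (6 * sech x ^ 5 * (-sinh x * sech x ^ 2)))) x := by
  have h := hasDerivAt_sech x
  have h4 := ((Real.hasDerivAt_sinh x).mul (h.pow 4)).const_mul 12
  have h6 := ((Real.hasDerivAt_sinh x).mul (h.pow 6)).const_mul 24
  have e : (fun y => 12 * sinh y * sech y ^ 4 - 24 * sinh y * sech y ^ 6)
      = (fun y => 12 * (sinh * sech ^ 4) y) - fun y => 24 * (sinh * sech ^ 6) y := by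
    funext y; simp only [Pi.sub_apply, Pi.mul_apply, Pi.pow_apply]; ring
  rw [e]
  refine (h4.sub h6).congr_deriv ?_
  simp only [Pi.pow_apply]
  ring

lemma step2 : Sop (fun y => 12 * sinh y * sech y ^ 4 - 24 * sinh y * sech y ^ 6)
    = fun y => -24 * sech y ^ 3 + 132 * sech y ^ 5 - 120 * sech y ^ 7 := by
  funext x
  have hs : sinh x ^ 2 = cosh x ^ 2 - 1 := Real.sinh_sq x
  simp only [Sop, (hg x).deriv, Real.tanh_eq_sinh_div_cosh]
  simp only [sech]
  have hc := (Real.cosh_pos x).ne'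
  field_simp
  linear_combination (120 - 36 * cosh x ^ 2) * hs

lemma hh (x : ℝ) : HasDerivAt (fun y => -24 * sech y ^ 3 + 132 * sech y ^ 5 - 120 * sech y ^ 7)
    (sinh x * (72 * sech x ^ 4 - 660 * sech x ^ 6 + 840 * sech x ^ 8)) x := by
  have h := hasDerivAt_sech x
  have h2 := (((h.pow 3).const_mul (-24)).add ((h.pow 5).const_mul 132)).sub ((h.pow 7).const_mul 120)
  refine h2.congr_deriv ?_
  ring

lemma hh1 (x : ℝ) : HasDerivAt (fun y => sinh y * (72 * sech y ^ 4 - 660 * sech y ^ 6 + 840 * sech y ^ 8))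
    (cosh x * (72 * sech x ^ 4 - 660 * sech x ^ 6 + 840 * sech x ^ 8)
      + sinh x * ((72 * (4 * sech x ^ 3) - 660 * (6 * sech x ^ 5) + 840 * (8 * sech x ^ 7)) * (-sinh x * sech x ^ 2))) x := by
  have h := hasDerivAt_sech x
  have h2 := (Real.hasDerivAt_sinh x).mul
    ((((h.pow 4).const_mul 72).sub ((h.pow 6).const_mul 660)).add ((h.pow 8).const_mul 840))
  refine h2.congr_deriv ?_
  simp only [Pi.add_apply, Pi.sub_apply, Pi.pow_apply]
  ring

/-- Identity (1.47) in the proof of Lemma 1.6: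
`D₁(sech − 6 sech³ + 6 sech⁵) = 192 sech³ − 3456 sech⁵ + 9720 sech⁷ − 6720 sech⁹`. -/
theorem D1_identity :
    ∀ x : ℝ,
      D1 (fun y => sech y - 6 * sech y ^ 3 + 6 * sech y ^ 5) x
        = 192 * sech x ^ 3 - 3456 * sech x ^ 5 + 9720 * sech x ^ 7 - 6720 * sech x ^ 9 := by
  intro x
  have hd : deriv (fun y => -24 * sech y ^ 3 + 132 * sech y ^ 5 - 120 * sech y ^ 7)
      = fun y => sinh y * (72 * sech y ^ 4 - 660 * sech y ^ 6 + 840 * sech y ^ 8) :=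
    funext fun y => (hh y).deriv
  simp only [D1, step1, step2, hd, (hh1 x).deriv]
  have hs : sinh x ^ 2 = cosh x ^ 2 - 1 := Real.sinh_sq x
  have hc := (Real.cosh_pos x).ne'
  simp only [sech]
  field_simp
  linear_combination (6720 - 3960 * cosh x ^ 2 + 288 * cosh x ^ 4) * hs
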